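/- arXiv:2301.10911 — 2 statements merged into one kernel-verified Lean document; each statement's English description precedes it below -/
import Mathlib

section
/- Let ξ be a random vector in ℝ^m distributed according to the multivariate Gaussian distribution with mean 0 and symmetric positive definite covariance matrix V, let Ψ be an m×m real matrix, let h ∈ ℝ^m, and let φ : ℝ^m → ℝ^m be continuously differentiable with Jacobian Dφ(x) (the matrix with (i,j) entry ∂φ_i/∂x_j). Assume that E[‖φ(ξ+h)‖·‖ξ‖] < ∞ and E[‖Dφ(ξ+h)‖] < ∞. Then E[φ(ξ+h)ᵀ · Ψ · ξ] = E[tr(Dφ(ξ+h)ᵀ · Ψ · V)]. -/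
open Matrix MeasureTheory ProbabilityTheory
open scoped ENNReal NNReal

noncomputable def rho : ℝ → ℝ := gaussianPDFReal 0 1

lemma rho_pos (x : ℝ) : 0 < rho x := gaussianPDFReal_pos 0 1 x one_ne_zero

lemma gauss_eq : gaussianReal 0 1 = volume.withDensity (fun x => ((rho x).toNNReal : ℝ≥0∞)) := by
  rw [gaussianReal_of_var_ne_zero 0 one_ne_zero]
  rfl

lemma meas_rho : Measurable fun x => (rho x).toNNReal :=
  (measurable_gaussianPDFReal 0 1).real_toNNReal

lemma integrable_gauss_iff {f : ℝ → ℝ} :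
    Integrable f (gaussianReal 0 1) ↔ Integrable (fun x => rho x * f x) volume := by
  rw [gauss_eq]
  rw [show (fun x => ((rho x).toNNReal : ℝ≥0∞)) = (fun x => ((((rho x).toNNReal : ℝ≥0)) : ℝ≥0∞)) from rfl]
  rw [integrable_withDensity_iff_integrable_smul meas_rho]
  apply integrable_congr
  filter_upwards with x
  simp [NNReal.smul_def, max_eq_left (rho_pos x).le]

lemma integral_gauss_eq (f : ℝ → ℝ) :
    ∫ x, f x ∂(gaussianReal 0 1) = ∫ x, rho x * f x := by
  rw [gauss_eq, integral_withDensity_eq_integral_smul meas_rho]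
  congr 1
  funext x
  simp [NNReal.smul_def, max_eq_left (rho_pos x).le]

lemma rho_hasDeriv (x : ℝ) : HasDerivAt rho (-x * rho x) x := by
  have h1 : rho = fun x => (Real.sqrt (2 * Real.pi))⁻¹ * Real.exp (-(x ^ 2) / 2) := by
    funext y
    simp [rho, gaussianPDFReal]
  rw [h1]
  have h2 : HasDerivAt (fun y : ℝ => -(y ^ 2) / 2) (-x) x := by
    have := ((hasDerivAt_pow 2 x).neg).div_const 2
    simpa using this.congr_deriv (by ring)
  have h3 := (h2.exp).const_mul (Real.sqrt (2 * Real.pi))⁻¹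
  exact h3.congr_deriv (by beta_reduce; ring)

lemma stein1D {g g' : ℝ → ℝ} (hd : ∀ x, HasDerivAt g (g' x) x)
    (h1 : Integrable (fun x => g x * x) (gaussianReal 0 1))
    (h2 : Integrable g' (gaussianReal 0 1)) :
    ∫ x, g x * x ∂(gaussianReal 0 1) = ∫ x, g' x ∂(gaussianReal 0 1) := by
  have hgc : Continuous g := continuous_iff_continuousAt.2 fun x => (hd x).continuousAt
  have hrc : Continuous rho := continuous_iff_continuousAt.2 fun x => (rho_hasDeriv x).continuousAt
  have h1v : Integrable (fun x => rho x * (g x * x)) volume := integrable_gauss_iff.1 h1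
  have h2v : Integrable (fun x => rho x * g' x) volume := integrable_gauss_iff.1 h2
  set F : ℝ → ℝ := fun x => g x * rho x with hF
  set F' : ℝ → ℝ := fun x => g' x * rho x + g x * (-x * rho x) with hF'
  have hdF : ∀ x, HasDerivAt F (F' x) x := fun x => (hd x).mul (rho_hasDeriv x)
  have hneg : (fun x => g x * (-x * rho x)) = fun x => -(rho x * (g x * x)) := by
    funext x; ring
  have hF'int : Integrable F' volume := by
    apply Integrable.add
    · exact h2v.congr (by filter_upwards with x using mul_comm _ _)
    · rw [hneg]; exact h1v.neg
  have hFint : Integrable F volume := by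
    obtain ⟨M, hM⟩ := (isCompact_Icc (a := (-1:ℝ)) (b := 1)).exists_bound_of_continuousOn
      hgc.continuousOn
    set M' := max M 0 with hM'
    have hbound : ∀ x, ‖F x‖ ≤ |rho x * (g x * x)| + M' * rho x := by
      intro x
      rcases le_or_gt (|x|) 1 with hx | hx
      · have hx' : x ∈ Set.Icc (-1:ℝ) 1 := abs_le.1 hx
        have : ‖F x‖ = |g x| * rho x := by
          rw [hF]; simp [abs_mul, abs_of_pos (rho_pos x)]
        rw [this]
        have : |g x| * rho x ≤ M' * rho x :=
          mul_le_mul_of_nonneg_right ((hM x hx').trans (le_max_left _ _)) (rho_pos x).le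
        refine this.trans (le_add_of_nonneg_left (abs_nonneg _))
      · have h1x : ‖F x‖ ≤ |rho x * (g x * x)| := by
          rw [hF]
          simp only [Real.norm_eq_abs, abs_mul]
          calc |g x| * |rho x| = |rho x| * |g x| * 1 := by ring
            _ ≤ |rho x| * |g x| * |x| := by
                apply mul_le_mul_of_nonneg_left hx.le (by positivity)
            _ = |rho x| * (|g x| * |x|) := by ring
        refine h1x.trans (le_add_of_nonneg_right ?_)
        have := (rho_pos x).le
        positivity
    refine Integrable.mono' (h1v.abs.add ((integrable_gaussianPDFReal 0 1).const_mul M'))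
      (hgc.mul hrc).aestronglyMeasurable ?_
    filter_upwards with x using hbound x
  have hzero : ∫ x, F' x = 0 :=
    integral_eq_zero_of_hasDerivAt_of_integrable hdF hF'int hFint
  have hsplit : ∫ x, F' x = (∫ x, rho x * g' x) - ∫ x, rho x * (g x * x) := by
    rw [hF', integral_add (h2v.congr (by filter_upwards with x using mul_comm _ _))
      (by rw [hneg]; exact h1v.neg)]
    rw [hneg, integral_neg]
    congr 1
    exact integral_congr_ae (by filter_upwards with x using mul_comm _ _)
  rw [integral_gauss_eq, integral_gauss_eq]
  have := hzero ▸ hsplit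
  linarith [this.symm]

/-- The standard Gaussian measure on `ℝ^m` (iid standard normal coordinates). -/
noncomputable def stdGaussian (m : ℕ) : Measure (Fin m → ℝ) :=
  Measure.pi fun _ => gaussianReal 0 1

/-- `μ` is the multivariate Gaussian law on `ℝ^m` with mean `mean` and covariance
matrix `V`, i.e. the law of `mean + A ζ` for a standard Gaussian `ζ` and any matrix
`A` with `A Aᵀ = V`. -/
def IsGaussianLaw {m : ℕ} (μ : Measure (Fin m → ℝ)) (mean : Fin m → ℝ)
    (V : Matrix (Fin m) (Fin m) ℝ) : Prop :=
  ∃ A : Matrix (Fin m) (Fin m) ℝ, A * Aᵀ = V ∧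
    μ = Measure.map (fun x => mean + A.mulVec x) (stdGaussian m)

/-- The Jacobian matrix of a map `φ : ℝ^m → ℝ^m`: entry `(i, j)` is `∂φᵢ/∂xⱼ`. -/
noncomputable def jacobian {m : ℕ} (φ : (Fin m → ℝ) → (Fin m → ℝ))
    (x : Fin m → ℝ) : Matrix (Fin m) (Fin m) ℝ :=
  Matrix.of fun i j => fderiv ℝ (fun y => φ y i) x (Pi.single j 1)

/-- The operator (spectral) norm of a real square matrix. -/
noncomputable def matOpNorm {n : ℕ} (A : Matrix (Fin n) (Fin n) ℝ) : ℝ :=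
  ‖Matrix.toEuclideanCLM (𝕜 := ℝ) A‖

lemma insertNth_affine {n : ℕ} (k : Fin (n+1)) (y : Fin n → ℝ) (t : ℝ) :
    (k.insertNth t y : Fin (n+1) → ℝ) = k.insertNth 0 y + t • (Pi.single k 1 : Fin (n+1) → ℝ) := by
  funext i
  rcases eq_or_ne i k with rfl | hik
  · simp
  · obtain ⟨j, rfl⟩ := Fin.exists_succAbove_eq hik
    simp [Pi.single_eq_of_ne hik]

lemma steinPi {n : ℕ} (k : Fin (n+1)) {G : (Fin (n+1) → ℝ) → ℝ} (hG : ContDiff ℝ 1 G)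
    (h1 : Integrable (fun x => G x * x k) (stdGaussian (n+1)))
    (h2 : Integrable (fun x => fderiv ℝ G x (Pi.single k 1)) (stdGaussian (n+1))) :
    ∫ x, G x * x k ∂(stdGaussian (n+1))
      = ∫ x, fderiv ℝ G x (Pi.single k 1) ∂(stdGaussian (n+1)) := by
  set ν := gaussianReal 0 1
  set τ : Measure (Fin n → ℝ) := Measure.pi (fun _ => gaussianReal 0 1) with hτ
  set e := MeasurableEquiv.piFinSuccAbove (fun _ : Fin (n+1) => ℝ) k with he
  have hmp : MeasurePreserving e (stdGaussian (n+1)) (ν.prod τ) :=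
    measurePreserving_piFinSuccAbove (fun _ => gaussianReal 0 1) k
  have hemb := e.symm.measurableEmbedding
  have hmps : MeasurePreserving e.symm (ν.prod τ) (stdGaussian (n+1)) := hmp.symm
  have hsymm : ∀ p : ℝ × (Fin n → ℝ), e.symm p = k.insertNth p.1 p.2 := fun p => rfl
  have key : ∀ g : (Fin (n+1) → ℝ) → ℝ,
      ∫ x, g x ∂(stdGaussian (n+1)) = ∫ p, g (k.insertNth p.1 p.2) ∂(ν.prod τ) := by
    intro g
    rw [← hmps.integral_comp hemb g]
    rfl
  have keyInt : ∀ g : (Fin (n+1) → ℝ) → ℝ, Integrable g (stdGaussian (n+1)) →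
      Integrable (fun p : ℝ × (Fin n → ℝ) => g (k.insertNth p.1 p.2)) (ν.prod τ) := by
    intro g hg
    exact (hmps.integrable_comp_emb hemb).2 hg
  have H1 : Integrable (fun p : ℝ × (Fin n → ℝ) => G (k.insertNth p.1 p.2) * p.1) (ν.prod τ) := by
    have := keyInt _ h1
    refine this.congr ?_
    filter_upwards with p
    simp
  have H2 : Integrable
      (fun p : ℝ × (Fin n → ℝ) => fderiv ℝ G (k.insertNth p.1 p.2) (Pi.single k 1)) (ν.prod τ) :=
    keyInt _ h2
  rw [key fun x => G x * x k, key fun x => fderiv ℝ G x (Pi.single k 1)]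
  have e1 : ∫ p : ℝ × (Fin n → ℝ), G (k.insertNth p.1 p.2) * (k.insertNth p.1 p.2 : Fin (n+1) → ℝ) k ∂(ν.prod τ)
      = ∫ y, ∫ t, G (k.insertNth t y) * t ∂ν ∂τ := by
    rw [show (fun p : ℝ × (Fin n → ℝ) => G (k.insertNth p.1 p.2) * (k.insertNth p.1 p.2 : Fin (n+1) → ℝ) k)
      = fun p : ℝ × (Fin n → ℝ) => G (k.insertNth p.1 p.2) * p.1 by funext p; simp]
    exact integral_prod_symm _ H1
  have e2 : ∫ p : ℝ × (Fin n → ℝ), fderiv ℝ G (k.insertNth p.1 p.2) (Pi.single k 1) ∂(ν.prod τ)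
      = ∫ y, ∫ t, fderiv ℝ G (k.insertNth t y) (Pi.single k 1) ∂ν ∂τ :=
    integral_prod_symm _ H2
  rw [e1, e2]
  apply integral_congr_ae
  filter_upwards [H1.prod_left_ae, H2.prod_left_ae] with y hy1 hy2
  have hd : ∀ t : ℝ, HasDerivAt (fun t => G (k.insertNth t y))
      (fderiv ℝ G (k.insertNth t y) (Pi.single k 1)) t := by
    intro t
    have hL : HasDerivAt (fun t : ℝ => (k.insertNth t y : Fin (n+1) → ℝ)) (Pi.single k 1 : Fin (n+1) → ℝ) t := by
      have : (fun t : ℝ => (k.insertNth t y : Fin (n+1) → ℝ))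
          = fun t : ℝ => k.insertNth 0 y + t • (Pi.single k 1 : Fin (n+1) → ℝ) := by
        funext t; exact insertNth_affine k y t
      rw [this]
      simpa using ((hasDerivAt_id t).smul_const (Pi.single k 1 : Fin (n+1) → ℝ)).const_add ((k.insertNth 0 y : Fin (n+1) → ℝ))
    exact ((hG.differentiable one_ne_zero) (k.insertNth t y)).hasFDerivAt.comp_hasDerivAt t hL
  exact stein1D hd hy1 hy2

lemma sqrt_dot {n : ℕ} (x : Fin n → ℝ) :
    Real.sqrt (x ⬝ᵥ x) = ‖(WithLp.equiv 2 (Fin n → ℝ)).symm x‖ := by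
  rw [EuclideanSpace.norm_eq]
  congr 1
  simp [dotProduct, WithLp.equiv_symm_apply, PiLp.toLp_apply, Real.norm_eq_abs, sq_abs, sq]

lemma dot_cs {n : ℕ} (u v : Fin n → ℝ) :
    |u ⬝ᵥ v| ≤ Real.sqrt (u ⬝ᵥ u) * Real.sqrt (v ⬝ᵥ v) := by
  rw [sqrt_dot, sqrt_dot]
  have := abs_real_inner_le_norm ((WithLp.equiv 2 (Fin n → ℝ)).symm u)
    ((WithLp.equiv 2 (Fin n → ℝ)).symm v)
  simpa [PiLp.inner_apply, WithLp.equiv_symm_apply, PiLp.toLp_apply, dotProduct, RCLike.inner_apply,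
    mul_comm] using this

lemma mulVec_sqrt_le {n : ℕ} (M : Matrix (Fin n) (Fin n) ℝ) (v : Fin n → ℝ) :
    Real.sqrt (M.mulVec v ⬝ᵥ M.mulVec v) ≤ matOpNorm M * Real.sqrt (v ⬝ᵥ v) := by
  rw [sqrt_dot, sqrt_dot]
  have h := (Matrix.toEuclideanCLM (𝕜 := ℝ) M).le_opNorm ((WithLp.equiv 2 (Fin n → ℝ)).symm v)
  have h2 : Matrix.toEuclideanCLM (𝕜 := ℝ) M ((WithLp.equiv 2 (Fin n → ℝ)).symm v)
      = (WithLp.equiv 2 (Fin n → ℝ)).symm (M.mulVec v) := by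
    rw [WithLp.equiv_symm_apply, Matrix.toEuclideanCLM_toLp]
  rw [h2] at h
  exact h

lemma clm_apply_eq_sum {m : ℕ} (L : (Fin m → ℝ) →L[ℝ] ℝ) (w : Fin m → ℝ) :
    L w = ∑ l, w l * L (Pi.single l 1) := by
  have hw : w = ∑ l, (Pi.single l (w l) : Fin m → ℝ) := by
    rw [Finset.univ_sum_single]
  conv_lhs => rw [hw]
  rw [map_sum]
  congr 1
  funext l
  have : (Pi.single l (w l) : Fin m → ℝ) = w l • (Pi.single l 1 : Fin m → ℝ) := by
    simp [← Pi.single_smul]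
  rw [this, L.map_smul, smul_eq_mul]

section main
variable {n : ℕ}

-- continuity of mulVec
lemma cont_mulVec (A : Matrix (Fin n) (Fin n) ℝ) :
    Continuous (fun x : Fin n → ℝ => A.mulVec x) := by
  have hh : (fun x : Fin n → ℝ => A.mulVec x) = fun x i => ∑ j, A i j * x j := by
    funext x i; simp [Matrix.mulVec, dotProduct]
  rw [hh]
  exact continuous_pi fun i => continuous_finset_sum _ fun j _ =>
    continuous_const.mul (continuous_apply j)

-- contDiff of mulVec
lemma contDiff_mulVec (A : Matrix (Fin n) (Fin n) ℝ) :
    ContDiff ℝ 1 (fun x : Fin n → ℝ => A.mulVec x) := by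
  have h := (LinearMap.toContinuousLinearMap (Matrix.mulVecLin A)).contDiff
    (𝕜 := ℝ) (n := 1)
  convert h using 1
  rfl

-- coordinate functions of φ are C¹
lemma contDiff_coord {φ : (Fin n → ℝ) → (Fin n → ℝ)} (hφ : ContDiff ℝ 1 φ) (i : Fin n) :
    ContDiff ℝ 1 (fun y => φ y i) := by
  exact (contDiff_pi.1 hφ) i

-- continuity of jacobian entries
lemma cont_jacobian {φ : (Fin n → ℝ) → (Fin n → ℝ)} (hφ : ContDiff ℝ 1 φ) :
    Continuous (fun x => jacobian φ x) := by
  apply continuous_matrix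
  intro i j
  exact ((contDiff_coord hφ i).continuous_fderiv one_ne_zero).clm_apply continuous_const

-- continuity of matOpNorm
set_option synthInstance.maxHeartbeats 1000000 in
set_option maxHeartbeats 1000000 in
lemma cont_matOpNorm : Continuous (fun X : Matrix (Fin n) (Fin n) ℝ => matOpNorm X) := by
  have hlin : Continuous (fun X : Matrix (Fin n) (Fin n) ℝ =>
      Matrix.toEuclideanCLM (𝕜 := ℝ) X) := by
    let L : Matrix (Fin n) (Fin n) ℝ →ₗ[ℝ]
        (EuclideanSpace ℝ (Fin n) →L[ℝ] EuclideanSpace ℝ (Fin n)) :=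
      { toFun := fun X => Matrix.toEuclideanCLM (𝕜 := ℝ) X
        map_add' := fun X Y => map_add _ X Y
        map_smul' := fun c X => _root_.map_smul (Matrix.toEuclideanCLM (𝕜 := ℝ)) c X }
    exact L.continuous_of_finiteDimensional
  exact continuous_norm.comp hlin

lemma sum4 {α : Type*} [Fintype α] (g : α → α → α → α → ℝ) :
    ∑ k, ∑ i, ∑ b, ∑ l, g k i b l = ∑ l, ∑ b, ∑ k, ∑ i, g k i b l := by
  calc ∑ k, ∑ i, ∑ b, ∑ l, g k i b l
      = ∑ k, ∑ i, ∑ l, ∑ b, g k i b l :=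
        Finset.sum_congr rfl fun k _ => Finset.sum_congr rfl fun i _ => Finset.sum_comm
    _ = ∑ k, ∑ l, ∑ i, ∑ b, g k i b l :=
        Finset.sum_congr rfl fun k _ => Finset.sum_comm
    _ = ∑ l, ∑ k, ∑ i, ∑ b, g k i b l := Finset.sum_comm
    _ = ∑ l, ∑ k, ∑ b, ∑ i, g k i b l :=
        Finset.sum_congr rfl fun l _ => Finset.sum_congr rfl fun k _ => Finset.sum_comm
    _ = ∑ l, ∑ b, ∑ k, ∑ i, g k i b l :=
        Finset.sum_congr rfl fun l _ => Finset.sum_comm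

lemma Gk_fderiv {A Ψ : Matrix (Fin n) (Fin n) ℝ} {h : Fin n → ℝ}
    {φ : (Fin n → ℝ) → (Fin n → ℝ)} (hφ : ContDiff ℝ 1 φ) (k : Fin n) (ζ : Fin n → ℝ) :
    fderiv ℝ (fun ζ => ∑ i, φ (A.mulVec ζ + h) i * (Ψ * A) i k) ζ (Pi.single k 1)
      = ∑ i, (∑ l, A l k * jacobian φ (A.mulVec ζ + h) i l) * (Ψ * A) i k := by
  set L := LinearMap.toContinuousLinearMap (Matrix.mulVecLin A) with hLdef
  have hLco : ⇑L = fun x : Fin n → ℝ => A.mulVec x := rfl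
  have hT : HasFDerivAt (fun ζ : Fin n → ℝ => A.mulVec ζ + h) L ζ := by
    have := (L.hasFDerivAt (x := ζ)).add_const h
    exact this
  set D : Fin n → (Fin n → ℝ) →L[ℝ] ℝ :=
    fun i => fderiv ℝ (fun y => φ y i) (A.mulVec ζ + h) with hD
  have hφi : ∀ i, HasFDerivAt (fun y => φ y i) (D i) (A.mulVec ζ + h) :=
    fun i => (((contDiff_coord hφ i).differentiable one_ne_zero) _).hasFDerivAt
  have hterm : ∀ i, HasFDerivAt (fun ζ : Fin n → ℝ => φ (A.mulVec ζ + h) i * (Ψ * A) i k)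
      ((Ψ * A) i k • ((D i).comp L)) ζ :=
    fun i => (((hφi i).comp ζ hT)).mul_const ((Ψ * A) i k)
  have hsum : HasFDerivAt (fun ζ : Fin n → ℝ => ∑ i, φ (A.mulVec ζ + h) i * (Ψ * A) i k)
      (∑ i, (Ψ * A) i k • ((D i).comp L)) ζ :=
    HasFDerivAt.fun_sum (fun i _ => hterm i)
  rw [hsum.fderiv]
  rw [ContinuousLinearMap.sum_apply]
  congr 1
  funext i
  rw [ContinuousLinearMap.smul_apply, ContinuousLinearMap.comp_apply]
  have hLs : L (Pi.single k 1) = fun l => A l k := by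
    rw [hLco]
    simp
    rfl
  rw [hLs, clm_apply_eq_sum (D i) (fun l => A l k)]
  have : ∀ l, (D i) (Pi.single l 1) = jacobian φ (A.mulVec ζ + h) i l := fun l => rfl
  simp only [this, smul_eq_mul]
  ring

lemma Gk_contDiff {A Ψ : Matrix (Fin n) (Fin n) ℝ} {h : Fin n → ℝ}
    {φ : (Fin n → ℝ) → (Fin n → ℝ)} (hφ : ContDiff ℝ 1 φ) (k : Fin n) :
    ContDiff ℝ 1 (fun ζ => ∑ i, φ (A.mulVec ζ + h) i * (Ψ * A) i k) :=
  ContDiff.sum fun i _ =>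
    ((contDiff_coord hφ i).comp ((contDiff_mulVec A).add contDiff_const)).mul contDiff_const

end main

/-- Generalized Stein lemma (Lemma 2 of Hansen 2016, Lemma B.5 of the paper):
for `ξ ~ N(0, V)` with `V` symmetric positive definite, `φ` continuously
differentiable with suitable integrability,
`E[φ(ξ+h)ᵀ Ψ ξ] = E[tr(Dφ(ξ+h)ᵀ Ψ V)]`. -/
theorem stmt_2 {m : ℕ} (V : Matrix (Fin m) (Fin m) ℝ) (hV : V.PosDef)
    (hVsymm : V.IsSymm) (μ : Measure (Fin m → ℝ)) (hμ : IsGaussianLaw μ 0 V)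
    (Ψ : Matrix (Fin m) (Fin m) ℝ) (h : Fin m → ℝ)
    (φ : (Fin m → ℝ) → (Fin m → ℝ)) (hφ : ContDiff ℝ 1 φ)
    (hint1 : Integrable
      (fun x => Real.sqrt (φ (x + h) ⬝ᵥ φ (x + h)) * Real.sqrt (x ⬝ᵥ x)) μ)
    (hint2 : Integrable (fun x => matOpNorm (jacobian φ (x + h))) μ) :
    ∫ x, φ (x + h) ⬝ᵥ Ψ.mulVec x ∂μ
      = ∫ x, ((jacobian φ (x + h))ᵀ * Ψ * V).trace ∂μ := by
  cases m with
  | zero =>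
      have h0 : ∀ x : Fin 0 → ℝ, φ (x + h) ⬝ᵥ Ψ.mulVec x = 0 := fun x => by
        simp [dotProduct]
      have h1 : ∀ x : Fin 0 → ℝ, (((jacobian φ (x + h))ᵀ * Ψ * V).trace) = 0 := fun x => by
        simp [Matrix.trace]
      simp only [h0, h1, integral_zero]
  | succ n =>
  obtain ⟨A, hAV, hμm⟩ := hμ
  have hTz : (fun x : Fin (n+1) → ℝ => (0 : Fin (n+1) → ℝ) + A.mulVec x)
      = fun x => A.mulVec x := funext fun x => zero_add _
  rw [hTz] at hμm
  -- A is invertible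
  have hdet : IsUnit A.det := by
    have hVdet : 0 < V.det := hV.det_pos
    rw [← hAV, Matrix.det_mul, Matrix.det_transpose] at hVdet
    exact isUnit_iff_ne_zero.2 fun h0 => by simp [h0] at hVdet
  have hAinv : A⁻¹ * A = 1 := Matrix.nonsing_inv_mul A hdet
  set P := stdGaussian (n+1) with hP
  set T := fun ζ : Fin (n+1) → ℝ => A.mulVec ζ with hT
  have hTc : Continuous T := cont_mulVec A
  -- continuity of integrands
  have hf1c : Continuous (fun x : Fin (n+1) → ℝ => φ (x + h) ⬝ᵥ Ψ.mulVec x) := by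
    have h1 : Continuous (fun x : Fin (n+1) → ℝ => φ (x + h)) :=
      hφ.continuous.comp (continuous_id.add continuous_const)
    have h2 : Continuous (fun x : Fin (n+1) → ℝ => Ψ.mulVec x) := cont_mulVec Ψ
    exact continuous_finset_sum _ fun i _ =>
      ((continuous_apply i).comp h1).mul ((continuous_apply i).comp h2)
  have hJc : Continuous (fun x : Fin (n+1) → ℝ => jacobian φ (x + h)) :=
    (cont_jacobian hφ).comp (continuous_id.add continuous_const)
  have hf2c : Continuous (fun x : Fin (n+1) → ℝ => ((jacobian φ (x + h))ᵀ * Ψ * V).trace) := by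
    have : (fun x : Fin (n+1) → ℝ => ((jacobian φ (x + h))ᵀ * Ψ * V).trace)
        = fun x => ∑ i, ∑ a, (∑ b, jacobian φ (x + h) b i * Ψ b a) * V a i := by
      funext x
      simp [Matrix.trace, Matrix.mul_apply, Matrix.diag, Matrix.transpose_apply]
    rw [this]
    refine continuous_finset_sum _ fun i _ => continuous_finset_sum _ fun a _ => ?_
    refine Continuous.mul (continuous_finset_sum _ fun b _ => ?_) continuous_const
    exact (((continuous_apply i).comp ((continuous_apply b).comp hJc))).mul continuous_const
  -- transfer integrals along the map
  rw [hμm, integral_map hTc.measurable.aemeasurable hf1c.aestronglyMeasurable,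
    integral_map hTc.measurable.aemeasurable hf2c.aestronglyMeasurable]
  -- transfer integrability
  rw [hμm] at hint1 hint2
  have hsq1c : Continuous (fun x : Fin (n+1) → ℝ =>
      Real.sqrt (φ (x + h) ⬝ᵥ φ (x + h)) * Real.sqrt (x ⬝ᵥ x)) := by
    have h1 : Continuous (fun x : Fin (n+1) → ℝ => φ (x + h)) :=
      hφ.continuous.comp (continuous_id.add continuous_const)
    have hdc : ∀ (u : (Fin (n+1) → ℝ) → (Fin (n+1) → ℝ)), Continuous u →
        Continuous (fun x => u x ⬝ᵥ u x) := fun u hu =>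
      continuous_finset_sum _ fun i _ =>
        ((continuous_apply i).comp hu).mul ((continuous_apply i).comp hu)
    exact (Real.continuous_sqrt.comp (hdc _ h1)).mul
      (Real.continuous_sqrt.comp (hdc _ continuous_id))
  have hint1' : Integrable (fun ζ =>
      Real.sqrt (φ (A.mulVec ζ + h) ⬝ᵥ φ (A.mulVec ζ + h))
        * Real.sqrt (A.mulVec ζ ⬝ᵥ A.mulVec ζ)) P :=
    (integrable_map_measure hsq1c.aestronglyMeasurable hTc.measurable.aemeasurable).1 hint1
  have hint2' : Integrable (fun ζ => matOpNorm (jacobian φ (A.mulVec ζ + h))) P := by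
    have hc : Continuous (fun x : Fin (n+1) → ℝ => matOpNorm (jacobian φ (x + h))) :=
      cont_matOpNorm.comp hJc
    exact (integrable_map_measure hc.aestronglyMeasurable hTc.measurable.aemeasurable).1 hint2
  set G : Fin (n+1) → (Fin (n+1) → ℝ) → ℝ :=
    fun k ζ => ∑ i, φ (A.mulVec ζ + h) i * (Ψ * A) i k with hG
  have hLHS : ∀ ζ : Fin (n+1) → ℝ,
      φ (A.mulVec ζ + h) ⬝ᵥ Ψ.mulVec (A.mulVec ζ) = ∑ k, G k ζ * ζ k := by
    intro ζ
    rw [Matrix.mulVec_mulVec]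
    simp only [hG, dotProduct, Matrix.mulVec, Finset.mul_sum, Finset.sum_mul]
    rw [Finset.sum_comm]
    exact Finset.sum_congr rfl fun k _ => Finset.sum_congr rfl fun i _ => by ring
  have hGmeas : ∀ k, Continuous (G k) := fun k => (Gk_contDiff hφ k).continuous
  have hζbound : ∀ (ζ : Fin (n+1) → ℝ) (k : Fin (n+1)),
      |ζ k| ≤ matOpNorm A⁻¹ * Real.sqrt (A.mulVec ζ ⬝ᵥ A.mulVec ζ) := by
    intro ζ k
    have h1 : |ζ k| ≤ Real.sqrt (ζ ⬝ᵥ ζ) := by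
      rw [show |ζ k| = Real.sqrt (ζ k * ζ k) from (Real.sqrt_mul_self_eq_abs (ζ k)).symm]
      apply Real.sqrt_le_sqrt
      exact Finset.single_le_sum (f := fun i => ζ i * ζ i)
        (fun i _ => mul_self_nonneg _) (Finset.mem_univ k)
    have h2 : ζ = A⁻¹.mulVec (A.mulVec ζ) := by
      rw [Matrix.mulVec_mulVec, hAinv, Matrix.one_mulVec]
    calc |ζ k| ≤ Real.sqrt (ζ ⬝ᵥ ζ) := h1
      _ = Real.sqrt (A⁻¹.mulVec (A.mulVec ζ) ⬝ᵥ A⁻¹.mulVec (A.mulVec ζ)) := by rw [← h2]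
      _ ≤ matOpNorm A⁻¹ * Real.sqrt (A.mulVec ζ ⬝ᵥ A.mulVec ζ) := mulVec_sqrt_le _ _
  have hGbound : ∀ k ζ, |G k ζ| ≤ Real.sqrt (φ (A.mulVec ζ + h) ⬝ᵥ φ (A.mulVec ζ + h))
      * Real.sqrt ((fun i => (Ψ * A) i k) ⬝ᵥ (fun i => (Ψ * A) i k)) := by
    intro k ζ
    have := dot_cs (φ (A.mulVec ζ + h)) (fun i => (Ψ * A) i k)
    simpa [hG, dotProduct] using this
  have hint1k : ∀ k, Integrable (fun ζ => G k ζ * ζ k) P := by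
    intro k
    set ck : Fin (n+1) → ℝ := fun i => (Ψ * A) i k with hck
    refine Integrable.mono'
      (hint1'.const_mul (Real.sqrt (ck ⬝ᵥ ck) * matOpNorm A⁻¹))
      ((hGmeas k).mul (continuous_apply k)).aestronglyMeasurable ?_
    filter_upwards with ζ
    rw [Real.norm_eq_abs, abs_mul]
    have hb := mul_le_mul (hGbound k ζ) (hζbound ζ k) (abs_nonneg _)
      (mul_nonneg (Real.sqrt_nonneg _) (Real.sqrt_nonneg _))
    calc |G k ζ| * |ζ k|
        ≤ Real.sqrt (φ (A.mulVec ζ + h) ⬝ᵥ φ (A.mulVec ζ + h)) * Real.sqrt (ck ⬝ᵥ ck)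
          * (matOpNorm A⁻¹ * Real.sqrt (A.mulVec ζ ⬝ᵥ A.mulVec ζ)) := hb
      _ = Real.sqrt (ck ⬝ᵥ ck) * matOpNorm A⁻¹
          * (Real.sqrt (φ (A.mulVec ζ + h) ⬝ᵥ φ (A.mulVec ζ + h))
            * Real.sqrt (A.mulVec ζ ⬝ᵥ A.mulVec ζ)) := by ring
  have hDGpt : ∀ (k : Fin (n+1)) (ζ : Fin (n+1) → ℝ), fderiv ℝ (G k) ζ (Pi.single k 1)
      = ∑ i, (∑ l, jacobian φ (A.mulVec ζ + h) i l * A l k) * (Ψ * A) i k := by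
    intro k ζ
    rw [show G k = fun ζ => ∑ i, φ (A.mulVec ζ + h) i * (Ψ * A) i k from rfl,
      Gk_fderiv hφ k ζ]
    exact Finset.sum_congr rfl fun i _ => by
      congr 1
      exact Finset.sum_congr rfl fun l _ => mul_comm _ _
  have hint2k : ∀ k, Integrable (fun ζ => fderiv ℝ (G k) ζ (Pi.single k 1)) P := by
    intro k
    rw [show (fun ζ => fderiv ℝ (G k) ζ (Pi.single k 1))
      = fun ζ => ∑ i, (∑ l, jacobian φ (A.mulVec ζ + h) i l * A l k) * (Ψ * A) i k
      from funext fun ζ => hDGpt k ζ]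
    set ack : Fin (n+1) → ℝ := fun l => A l k with hack
    set ck : Fin (n+1) → ℝ := fun i => (Ψ * A) i k with hck
    have hcont : Continuous
        (fun ζ => ∑ i, (∑ l, jacobian φ (A.mulVec ζ + h) i l * A l k) * (Ψ * A) i k) := by
      refine continuous_finset_sum _ fun i _ => Continuous.mul ?_ continuous_const
      refine continuous_finset_sum _ fun l _ => Continuous.mul ?_ continuous_const
      exact ((continuous_apply l).comp ((continuous_apply i).comp (hJc.comp (cont_mulVec A))))
    refine Integrable.mono'
      (hint2'.const_mul (Real.sqrt (ack ⬝ᵥ ack) * Real.sqrt (ck ⬝ᵥ ck)))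
      hcont.aestronglyMeasurable ?_
    filter_upwards with ζ
    rw [Real.norm_eq_abs]
    set J := jacobian φ (A.mulVec ζ + h) with hJ
    calc |∑ i, (∑ l, J i l * A l k) * (Ψ * A) i k|
        = |J.mulVec ack ⬝ᵥ ck| := rfl
      _ ≤ Real.sqrt (J.mulVec ack ⬝ᵥ J.mulVec ack) * Real.sqrt (ck ⬝ᵥ ck) := dot_cs _ _
      _ ≤ matOpNorm J * Real.sqrt (ack ⬝ᵥ ack) * Real.sqrt (ck ⬝ᵥ ck) :=
          mul_le_mul_of_nonneg_right (mulVec_sqrt_le J ack) (Real.sqrt_nonneg _)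
      _ = Real.sqrt (ack ⬝ᵥ ack) * Real.sqrt (ck ⬝ᵥ ck) * matOpNorm J := by ring
  have hstein : ∀ k, ∫ ζ, G k ζ * ζ k ∂P = ∫ ζ, fderiv ℝ (G k) ζ (Pi.single k 1) ∂P :=
    fun k => steinPi k (Gk_contDiff hφ k) (hint1k k) (hint2k k)
  have htrace : ∀ ζ : Fin (n+1) → ℝ,
      (∑ k, ∑ i, (∑ l, jacobian φ (A.mulVec ζ + h) i l * A l k) * (Ψ * A) i k)
        = ((jacobian φ (A.mulVec ζ + h))ᵀ * Ψ * V).trace := by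
    intro ζ
    rw [← hAV]
    set J := jacobian φ (A.mulVec ζ + h) with hJ
    simp only [Matrix.trace, Matrix.diag, Matrix.mul_apply, Matrix.transpose_apply,
      Finset.sum_mul, Finset.mul_sum]
    rw [sum4 (fun k i b l => J i l * A l k * (Ψ i b * A b k))]
    exact Finset.sum_congr rfl fun l _ => Finset.sum_congr rfl fun b _ =>
      Finset.sum_congr rfl fun k _ => Finset.sum_congr rfl fun i _ => by ring
  calc ∫ ζ, φ (A.mulVec ζ + h) ⬝ᵥ Ψ.mulVec (A.mulVec ζ) ∂P
      = ∫ ζ, ∑ k, G k ζ * ζ k ∂P := by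
        exact integral_congr_ae (Filter.Eventually.of_forall hLHS)
    _ = ∑ k, ∫ ζ, G k ζ * ζ k ∂P := integral_finset_sum _ (fun k _ => hint1k k)
    _ = ∑ k, ∫ ζ, fderiv ℝ (G k) ζ (Pi.single k 1) ∂P :=
        Finset.sum_congr rfl fun k _ => hstein k
    _ = ∫ ζ, ∑ k, fderiv ℝ (G k) ζ (Pi.single k 1) ∂P :=
        (integral_finset_sum _ (fun k _ => hint2k k)).symm
    _ = ∫ ζ, ((jacobian φ (A.mulVec ζ + h))ᵀ * Ψ * V).trace ∂P := by
        apply integral_congr_ae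
        filter_upwards with ζ
        simp only [hDGpt]
        exact htrace ζ
end

section
/- For every real ω, E[‖Γ₁(ξ+τ) − ω·(Γ₁−Γ)(ξ+τ)‖²_Υ] = tr(Υ·Γ₁·Ω·Γ₁ᵀ) + ω²·(tr(Υ·M) + τᵀ·P·τ) − 2·ω·tr(Υ·M). -/
open Matrix MeasureTheory ProbabilityTheory

instance (m : ℕ) : IsProbabilityMeasure (stdGaussian m) := by
  unfold _root_.stdGaussian; infer_instance

section Aux
open Real
open scoped ENNReal NNReal

lemma gauss_std_integral (g : ℝ → ℝ) :
    ∫ x, g x ∂(gaussianReal 0 1) = ∫ x, gaussianPDFReal 0 1 x * g x := by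
  rw [gaussianReal_of_var_ne_zero 0 one_ne_zero]
  have h : gaussianPDF 0 1 = fun x => ((gaussianPDFReal 0 1 x).toNNReal : ℝ≥0∞) := rfl
  rw [h, integral_withDensity_eq_integral_smul (measurable_gaussianPDFReal 0 1).real_toNNReal g]
  congr 1; funext x
  simp [NNReal.smul_def, Real.coe_toNNReal _ (gaussianPDFReal_nonneg 0 1 x)]

lemma gauss_std_integrable_iff (g : ℝ → ℝ) :
    Integrable g (gaussianReal 0 1) ↔ Integrable (fun x => gaussianPDFReal 0 1 x * g x) := by
  rw [gaussianReal_of_var_ne_zero 0 one_ne_zero]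
  have h : gaussianPDF 0 1 = fun x => ((gaussianPDFReal 0 1 x).toNNReal : ℝ≥0∞) := rfl
  rw [h, integrable_withDensity_iff_integrable_smul (measurable_gaussianPDFReal 0 1).real_toNNReal]
  constructor <;> intro hh <;> refine hh.congr (Filter.Eventually.of_forall fun x => ?_) <;>
    simp [NNReal.smul_def, Real.coe_toNNReal _ (gaussianPDFReal_nonneg 0 1 x)]

lemma gaussPDF_std_eq : gaussianPDFReal 0 1 = fun x =>
    (√(2 * π))⁻¹ * rexp (-(1/2) * x ^ 2) := by
  funext x
  simp only [gaussianPDFReal, NNReal.coe_one, mul_one, sub_zero]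
  ring_nf

lemma gauss_integrable_id : Integrable (fun x : ℝ => x) (gaussianReal 0 1) := by
  rw [gauss_std_integrable_iff, gaussPDF_std_eq]
  have h : (fun x : ℝ => (√(2 * π))⁻¹ * rexp (-(1/2) * x ^ 2) * x)
      = fun x : ℝ => (√(2 * π))⁻¹ * (x * rexp (-(1/2) * x ^ 2)) := by funext x; ring
  rw [h]
  exact (integrable_mul_exp_neg_mul_sq (by norm_num : (0:ℝ) < 1/2)).const_mul _

lemma gauss_integrable_sq : Integrable (fun x : ℝ => x * x) (gaussianReal 0 1) := by
  rw [gauss_std_integrable_iff, gaussPDF_std_eq]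
  have h : (fun x : ℝ => (√(2 * π))⁻¹ * rexp (-(1/2) * x ^ 2) * (x * x))
      = fun x : ℝ => (√(2 * π))⁻¹ * (x ^ (2:ℝ) * rexp (-(1/2) * x ^ 2)) := by
    funext x
    rw [show x ^ (2:ℝ) = x ^ (2:ℕ) by rw [← Real.rpow_natCast x 2]; norm_num]
    ring
  rw [h]
  exact (integrable_rpow_mul_exp_neg_mul_sq (by norm_num : (0:ℝ) < 1/2)
    (by norm_num : (-1:ℝ) < 2)).const_mul _

lemma gauss_mean : ∫ x, x ∂(gaussianReal 0 1) = 0 := by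
  rw [gauss_std_integral, gaussPDF_std_eq]
  have h := integral_neg_eq_self (fun x : ℝ => (√(2 * π))⁻¹ * rexp (-(1/2) * x ^ 2) * x) volume
  have h2 : (fun x : ℝ => (√(2 * π))⁻¹ * rexp (-(1/2) * (-x) ^ 2) * (-x))
      = fun x : ℝ => -((√(2 * π))⁻¹ * rexp (-(1/2) * x ^ 2) * x) := by funext x; ring_nf
  rw [h2] at h
  rw [integral_neg] at h
  linarith

lemma gauss_second_moment : ∫ x, x * x ∂(gaussianReal 0 1) = 1 := by
  rw [gauss_std_integral, gaussPDF_std_eq]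
  have h : (fun x : ℝ => (√(2 * π))⁻¹ * rexp (-(1/2) * x ^ 2) * (x * x))
      = fun x : ℝ => (√(2 * π))⁻¹ * ((fun y : ℝ => y ^ (2:ℝ) * rexp (-(1/2) * y ^ (2:ℝ))) |x|) := by
    funext x
    simp only
    rw [show |x| ^ (2:ℝ) = x ^ (2:ℕ) by
      rw [show ((2:ℝ)) = ((2:ℕ):ℝ) by norm_num, Real.rpow_natCast, sq_abs]]
    ring
  rw [h, integral_const_mul,
    integral_comp_abs (f := fun y : ℝ => y ^ (2:ℝ) * rexp (-(1/2) * y ^ (2:ℝ)))]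
  have key : ∫ x in Set.Ioi (0:ℝ), x ^ (2:ℝ) * rexp (-(1/2) * x ^ (2:ℝ))
      = (1/2 : ℝ) ^ (-((2:ℝ)+1)/2) * (1/2) * Real.Gamma (((2:ℝ)+1)/2) := by
    have := integral_rpow_mul_exp_neg_mul_rpow (p := 2) (q := 2) (b := 1/2)
      (by norm_num) (by norm_num) (by norm_num)
    exact this
  rw [key]
  have hG : Real.Gamma (((2:ℝ)+1)/2) = (1/2) * √π := by
    have : ((2:ℝ)+1)/2 = 1/2 + 1 := by norm_num
    rw [this, Real.Gamma_add_one (by norm_num), Real.Gamma_one_half_eq]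
  rw [hG]
  have hpow : (1/2 : ℝ) ^ (-((2:ℝ)+1)/2) = 2 * √2 := by
    rw [show -((2:ℝ)+1)/2 = -(3/2) by norm_num, one_div,
      Real.inv_rpow (by norm_num), Real.rpow_neg (by norm_num), inv_inv,
      show (3/2 : ℝ) = 1 + 1/2 by norm_num, Real.rpow_add (by norm_num),
      Real.rpow_one, ← Real.sqrt_eq_rpow]
  rw [hpow, Real.sqrt_mul (by norm_num : (0:ℝ) ≤ 2)]
  have h2 : (0:ℝ) < √2 := Real.sqrt_pos.mpr (by norm_num)
  have hp : (0:ℝ) < √π := Real.sqrt_pos.mpr Real.pi_pos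
  field_simp

section Std
variable {m : ℕ}

lemma std_prod_integrable (f : Fin m → ℝ → ℝ)
    (hf : ∀ i, Integrable (f i) (gaussianReal 0 1)) :
    Integrable (fun x : Fin m → ℝ => ∏ i, f i (x i)) (stdGaussian m) := by
  letI : MeasureSpace ℝ := ⟨gaussianReal 0 1⟩
  haveI : SigmaFinite (volume : Measure ℝ) := inferInstanceAs (SigmaFinite (gaussianReal 0 1))
  exact MeasureTheory.Integrable.fintype_prod (f := f) hf

lemma std_prod_integral (f : Fin m → ℝ → ℝ) :
    ∫ x, ∏ i, f i (x i) ∂(stdGaussian m) = ∏ i, ∫ y, f i y ∂(gaussianReal 0 1) := by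
  letI : MeasureSpace ℝ := ⟨gaussianReal 0 1⟩
  haveI : SigmaFinite (volume : Measure ℝ) := inferInstanceAs (SigmaFinite (gaussianReal 0 1))
  exact MeasureTheory.integral_fintype_prod_eq_prod f

lemma std_integrable_eval (i : Fin m) :
    Integrable (fun x : Fin m → ℝ => x i) (stdGaussian m) := by
  have h := std_prod_integrable (m := m) (fun k y => if k = i then y else 1) ?_
  · refine h.congr (Filter.Eventually.of_forall fun x => ?_)
    simp [Finset.prod_ite_eq']
  · intro k
    by_cases hk : k = i
    · simpa [hk] using gauss_integrable_id
    · simpa [hk] using (integrable_const (1:ℝ) (μ := gaussianReal 0 1))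

lemma std_integrable_pair (i j : Fin m) :
    Integrable (fun x : Fin m → ℝ => x i * x j) (stdGaussian m) := by
  by_cases hij : i = j
  · subst hij
    have h := std_prod_integrable (m := m) (fun k y => if k = i then y * y else 1) ?_
    · refine h.congr (Filter.Eventually.of_forall fun x => ?_)
      simp [Finset.prod_ite_eq']
    · intro k
      by_cases hk : k = i
      · simpa [hk] using gauss_integrable_sq
      · simp [hk]
  · have h := std_prod_integrable (m := m)
      (fun k y => (if k = i then y else 1) * (if k = j then y else 1)) ?_
    · refine h.congr (Filter.Eventually.of_forall fun x => ?_)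
      show (∏ k, ((if k = i then x k else 1) * (if k = j then x k else 1))) = x i * x j
      rw [Finset.prod_mul_distrib]
      simp [Finset.prod_ite_eq']
    · intro k
      by_cases hki : k = i <;> by_cases hkj : k = j
      · exact absurd (hki ▸ hkj) (by simpa [hki] using hij)
      · simpa [hki, hkj, hij, Ne.symm hij] using gauss_integrable_id
      · simpa [hki, hkj, hij, Ne.symm hij] using gauss_integrable_id
      · simp [hki, hkj]

lemma std_moment_one (i : Fin m) : ∫ x, x i ∂(stdGaussian m) = 0 := by
  have h : (fun x : Fin m → ℝ => x i)
      = fun x => ∏ k, (if k = i then x k else 1) := by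
    funext x; simp [Finset.prod_ite_eq']
  have h2 := std_prod_integral (m := m) (fun k y => if k = i then y else 1)
  rw [h, h2]
  refine Finset.prod_eq_zero (Finset.mem_univ i) ?_
  simpa using gauss_mean

lemma std_moment_two (i j : Fin m) :
    ∫ x, x i * x j ∂(stdGaussian m) = if i = j then 1 else 0 := by
  by_cases hij : i = j
  · subst hij
    have h : (fun x : Fin m → ℝ => x i * x i)
        = fun x => ∏ k, (if k = i then x k * x k else 1) := by
      funext x; simp [Finset.prod_ite_eq']
    have h2 := std_prod_integral (m := m) (fun k y => if k = i then y * y else 1)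
    rw [h, h2, if_pos rfl]
    refine Finset.prod_eq_one fun k _ => ?_
    by_cases hk : k = i
    · simpa [hk] using gauss_second_moment
    · simp [hk]
  · have h : (fun x : Fin m → ℝ => x i * x j)
        = fun x => ∏ k, ((if k = i then x k else 1) * (if k = j then x k else 1)) := by
      funext x
      rw [Finset.prod_mul_distrib]
      simp [Finset.prod_ite_eq']
    have h2 := std_prod_integral (m := m)
      (fun k y => (if k = i then y else 1) * (if k = j then y else 1))
    rw [h, h2, if_neg hij]
    refine Finset.prod_eq_zero (Finset.mem_univ i) ?_
    have : ∫ y, (if i = i then y else 1) * (if i = j then y else 1) ∂(gaussianReal 0 1)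
        = ∫ y, y ∂(gaussianReal 0 1) := by
      congr 1; funext y; simp [hij]
    rw [this, gauss_mean]

end Std

section Vec
variable {m d₁ : ℕ}

lemma quad_rep (R : Matrix (Fin m) (Fin m) ℝ) (ζ : Fin m → ℝ) :
    ζ ⬝ᵥ R.mulVec ζ = ∑ i, ∑ j, R i j * (ζ i * ζ j) := by
  simp only [dotProduct, Matrix.mulVec, Finset.mul_sum]
  exact Finset.sum_congr rfl fun i _ => Finset.sum_congr rfl fun j _ => by ring

lemma std_integrable_quad (R : Matrix (Fin m) (Fin m) ℝ) :
    Integrable (fun ζ : Fin m → ℝ => ζ ⬝ᵥ R.mulVec ζ) (stdGaussian m) := by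
  simp only [quad_rep]
  exact integrable_finset_sum _ fun i _ =>
    integrable_finset_sum _ fun j _ => (std_integrable_pair i j).const_mul _

lemma std_integral_quad (R : Matrix (Fin m) (Fin m) ℝ) :
    ∫ ζ, ζ ⬝ᵥ R.mulVec ζ ∂(stdGaussian m) = R.trace := by
  simp only [quad_rep]
  rw [integral_finset_sum _ fun i _ =>
    integrable_finset_sum _ fun j _ => (std_integrable_pair (m := m) i j).const_mul (R i j)]
  have : ∀ i : Fin m, ∫ ζ, ∑ j, R i j * (ζ i * ζ j) ∂(stdGaussian m) = R i i := by
    intro i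
    rw [integral_finset_sum _ fun j _ => (std_integrable_pair i j).const_mul _]
    have : ∀ j : Fin m, ∫ ζ, R i j * (ζ i * ζ j) ∂(stdGaussian m)
        = R i j * if i = j then 1 else 0 := fun j => by
      rw [integral_const_mul, std_moment_two]
    simp only [this, mul_ite, mul_one, mul_zero, Finset.sum_ite_eq, Finset.mem_univ, if_pos]
  simp only [this, Matrix.trace, Matrix.diag]

lemma std_integrable_lin (l : Fin m → ℝ) :
    Integrable (fun ζ : Fin m → ℝ => l ⬝ᵥ ζ) (stdGaussian m) := by
  simp only [dotProduct]
  exact integrable_finset_sum _ fun i _ => (std_integrable_eval i).const_mul _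

lemma std_integral_lin (l : Fin m → ℝ) :
    ∫ ζ, l ⬝ᵥ ζ ∂(stdGaussian m) = 0 := by
  simp only [dotProduct]
  rw [integral_finset_sum _ fun i _ => (std_integrable_eval i).const_mul _]
  simp [integral_const_mul, std_moment_one]

lemma gauss_quad (C : Matrix (Fin d₁) (Fin m) ℝ) (c : Fin d₁ → ℝ)
    (Υ : Matrix (Fin d₁) (Fin d₁) ℝ) :
    ∫ ζ, (C.mulVec ζ + c) ⬝ᵥ Υ.mulVec (C.mulVec ζ + c) ∂(stdGaussian m)
      = (Cᵀ * Υ * C).trace + c ⬝ᵥ Υ.mulVec c := by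
  have hrw : ∀ ζ : Fin m → ℝ, (C.mulVec ζ + c) ⬝ᵥ Υ.mulVec (C.mulVec ζ + c)
      = ζ ⬝ᵥ (Cᵀ * Υ * C).mulVec ζ
        + ((((Υ.mulVec c) ᵥ* C + (c ᵥ* Υ) ᵥ* C) ⬝ᵥ ζ) + c ⬝ᵥ Υ.mulVec c) := by
    intro ζ
    rw [Matrix.mulVec_add, add_dotProduct, dotProduct_add, dotProduct_add]
    have h1 : C.mulVec ζ ⬝ᵥ Υ.mulVec (C.mulVec ζ) = ζ ⬝ᵥ (Cᵀ * Υ * C).mulVec ζ := by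
      rw [Matrix.mulVec_mulVec]
      rw [show C.mulVec ζ = ζ ᵥ* Cᵀ from (Matrix.vecMul_transpose C ζ).symm]
      rw [Matrix.dotProduct_mulVec, Matrix.vecMul_vecMul, ← Matrix.dotProduct_mulVec,
        ← Matrix.mul_assoc]
    have h2 : C.mulVec ζ ⬝ᵥ Υ.mulVec c = ((Υ.mulVec c) ᵥ* C) ⬝ᵥ ζ := by
      rw [dotProduct_comm, Matrix.dotProduct_mulVec]
    have h3 : c ⬝ᵥ Υ.mulVec (C.mulVec ζ) = ((c ᵥ* Υ) ᵥ* C) ⬝ᵥ ζ := by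
      rw [Matrix.mulVec_mulVec, Matrix.dotProduct_mulVec, Matrix.vecMul_vecMul]
    rw [h1, h2, h3, add_dotProduct]
    ring
  simp only [hrw]
  have hI2 : Integrable (fun ζ : Fin m → ℝ =>
      (((Υ.mulVec c) ᵥ* C + (c ᵥ* Υ) ᵥ* C) ⬝ᵥ ζ) + c ⬝ᵥ Υ.mulVec c) (stdGaussian m) :=
    (std_integrable_lin _).add (integrable_const _)
  rw [integral_add (std_integrable_quad _) hI2,
    integral_add (std_integrable_lin _) (integrable_const _),
    std_integral_quad, std_integral_lin, integral_const]
  simp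

end Vec
end Aux

/-- Fixed-weight asymptotic risk expansion of the linear-pool semi-modular posterior
mean (central computation in the proof of Lemma 2 of the paper). -/
theorem stmt_8 {m d₁ : ℕ}
    (Ω : Matrix (Fin m) (Fin m) ℝ) (hΩ : Ω.PosSemidef)
    (μ : Measure (Fin m → ℝ)) (hμ : IsGaussianLaw μ 0 Ω)
    (τ : Fin m → ℝ)
    (Γ₁ Γ : Matrix (Fin d₁) (Fin m) ℝ) (hΓ₁τ : Γ₁.mulVec τ = 0)
    (Υ : Matrix (Fin d₁) (Fin d₁) ℝ) (hΥ : Υ.PosDef) (hΥsymm : Υ.IsSymm)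
    (M : Matrix (Fin d₁) (Fin d₁) ℝ) (hMdef : M = (Γ₁ - Γ) * Ω * (Γ₁ - Γ)ᵀ)
    (hMcross : Γ₁ * Ω * (Γ₁ - Γ)ᵀ = M)
    (P : Matrix (Fin m) (Fin m) ℝ) (hPdef : P = (Γ₁ - Γ)ᵀ * Υ * (Γ₁ - Γ))
    :
    ∀ w : ℝ,
      ∫ x, (Γ₁.mulVec (x + τ) - w • (Γ₁ - Γ).mulVec (x + τ))
            ⬝ᵥ Υ.mulVec (Γ₁.mulVec (x + τ) - w • (Γ₁ - Γ).mulVec (x + τ)) ∂μ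
        = (Υ * Γ₁ * Ω * Γ₁ᵀ).trace
          + w ^ 2 * ((Υ * M).trace + τ ⬝ᵥ P.mulVec τ)
          - 2 * w * (Υ * M).trace := by
  intro w
  obtain ⟨A, hA, hmap⟩ := hμ
  set D : Matrix (Fin d₁) (Fin m) ℝ := Γ₁ - Γ with hD
  set B : Matrix (Fin d₁) (Fin m) ℝ := Γ₁ - w • D with hB
  have hBvec : ∀ v : Fin m → ℝ,
      Γ₁.mulVec v - w • D.mulVec v = B.mulVec v := by
    intro v
    simp only [hB, Matrix.sub_mulVec, Matrix.smul_mulVec]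
  -- measurability of the map
  have hT : Measurable (fun x : Fin m → ℝ => (0 : Fin m → ℝ) + A.mulVec x) := by
    refine measurable_pi_lambda _ fun i => ?_
    simp only [Pi.add_apply, Pi.zero_apply, Matrix.mulVec, dotProduct]
    exact (Finset.measurable_sum _ fun j _ =>
      (by fun_prop : Measurable fun c : Fin m → ℝ => A i j * c j)).const_add 0
  -- measurability of the integrand
  have hcoord : ∀ (C : Matrix (Fin d₁) (Fin m) ℝ) (i : Fin d₁),
      Measurable (fun x : Fin m → ℝ => (C.mulVec (x + τ)) i) := by
    intro C i
    simp only [Matrix.mulVec, dotProduct, Pi.add_apply]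
    exact Finset.measurable_sum _ fun j _ =>
      (by fun_prop : Measurable fun x : Fin m → ℝ => C i j * (x j + τ j))
  have hf : Measurable (fun x : Fin m → ℝ =>
      (B.mulVec (x + τ)) ⬝ᵥ Υ.mulVec (B.mulVec (x + τ))) := by
    simp only [dotProduct]
    refine Finset.measurable_sum _ fun i _ => ?_
    refine (hcoord B i).mul ?_
    have hrfl : (fun x : Fin m → ℝ => (Υ.mulVec (B.mulVec (x + τ))) i)
        = fun x => ∑ k, Υ i k * (B.mulVec (x + τ)) k := rfl
    rw [hrfl]
    exact Finset.measurable_sum _ fun k _ => (hcoord B k).const_mul (Υ i k)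
  have hint : ∀ x : Fin m → ℝ,
      (Γ₁.mulVec (x + τ) - w • D.mulVec (x + τ))
        ⬝ᵥ Υ.mulVec (Γ₁.mulVec (x + τ) - w • D.mulVec (x + τ))
      = (B.mulVec (x + τ)) ⬝ᵥ Υ.mulVec (B.mulVec (x + τ)) := by
    intro x; rw [hBvec]
  calc ∫ x, (Γ₁.mulVec (x + τ) - w • D.mulVec (x + τ))
            ⬝ᵥ Υ.mulVec (Γ₁.mulVec (x + τ) - w • D.mulVec (x + τ)) ∂μ
      = ∫ x, (B.mulVec (x + τ)) ⬝ᵥ Υ.mulVec (B.mulVec (x + τ)) ∂μ := by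
        simp only [hint]
    _ = ∫ ζ, (B.mulVec ((0 + A.mulVec ζ) + τ)) ⬝ᵥ Υ.mulVec (B.mulVec ((0 + A.mulVec ζ) + τ))
          ∂(stdGaussian m) := by
        rw [hmap, integral_map hT.aemeasurable hf.aestronglyMeasurable]
    _ = ∫ ζ, ((B * A).mulVec ζ + B.mulVec τ) ⬝ᵥ Υ.mulVec ((B * A).mulVec ζ + B.mulVec τ)
          ∂(stdGaussian m) := by
        congr 1; funext ζ
        rw [zero_add, Matrix.mulVec_add, Matrix.mulVec_mulVec]
    _ = ((B * A)ᵀ * Υ * (B * A)).trace + (B.mulVec τ) ⬝ᵥ Υ.mulVec (B.mulVec τ) :=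
        gauss_quad (B * A) (B.mulVec τ) Υ
    _ = (Υ * Γ₁ * Ω * Γ₁ᵀ).trace + w ^ 2 * ((Υ * M).trace + τ ⬝ᵥ P.mulVec τ)
          - 2 * w * (Υ * M).trace := by
        have hΩsymm : Ωᵀ = Ω := hΩ.1.eq
        have h1 : ((B * A)ᵀ * Υ * (B * A)).trace = (Υ * (B * Ω * Bᵀ)).trace := by
          rw [Matrix.trace_mul_comm, ← Matrix.mul_assoc, Matrix.trace_mul_comm (B * A * (B * A)ᵀ) Υ]
          congr 1
          rw [Matrix.transpose_mul, ← hA]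
          simp only [Matrix.mul_assoc]
        have hexp : Υ * (B * Ω * Bᵀ)
            = Υ * (Γ₁ * Ω * Γ₁ᵀ) - w • (Υ * (Γ₁ * Ω * Dᵀ)) - w • (Υ * (D * Ω * Γ₁ᵀ))
              + (w * w) • (Υ * (D * Ω * Dᵀ)) := by
          rw [hB]
          simp only [Matrix.transpose_sub, Matrix.transpose_smul, Matrix.sub_mul,
            Matrix.mul_sub, Matrix.smul_mul, Matrix.mul_smul, smul_smul]
          module
        have hDΩΓ : D * Ω * Γ₁ᵀ = Mᵀ := by
          rw [← hMcross, Matrix.transpose_mul, Matrix.transpose_mul,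
            Matrix.transpose_transpose, hΩsymm, ← Matrix.mul_assoc]
        have hMT : (Υ * Mᵀ).trace = (Υ * M).trace := by
          conv_lhs => rw [← Matrix.trace_transpose, Matrix.transpose_mul,
            Matrix.transpose_transpose, hΥsymm]
          rw [Matrix.trace_mul_comm]
        have hassoc : Υ * (Γ₁ * Ω * Γ₁ᵀ) = Υ * Γ₁ * Ω * Γ₁ᵀ := by
          simp only [Matrix.mul_assoc]
        have hc : B.mulVec τ = -(w • D.mulVec τ) := by
          rw [hB, Matrix.sub_mulVec, hΓ₁τ, Matrix.smul_mulVec, zero_sub]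
        have hcval : (B.mulVec τ) ⬝ᵥ Υ.mulVec (B.mulVec τ)
            = w * w * ((D.mulVec τ) ⬝ᵥ Υ.mulVec (D.mulVec τ)) := by
          rw [hc, Matrix.mulVec_neg, Matrix.mulVec_smul, neg_dotProduct,
            dotProduct_neg, neg_neg, smul_dotProduct, dotProduct_smul,
            smul_eq_mul, smul_eq_mul]
          ring
        have hPτ : τ ⬝ᵥ P.mulVec τ = (D.mulVec τ) ⬝ᵥ Υ.mulVec (D.mulVec τ) := by
          rw [hPdef, Matrix.mul_assoc, ← Matrix.mulVec_mulVec,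
            Matrix.dotProduct_mulVec τ Dᵀ, Matrix.vecMul_transpose, ← Matrix.mulVec_mulVec]
        rw [h1, hexp, Matrix.trace_add, Matrix.trace_sub, Matrix.trace_sub,
          Matrix.trace_smul, Matrix.trace_smul, Matrix.trace_smul,
          hMcross, hDΩΓ, ← hMdef, hassoc, hcval, hPτ, hMT]
        simp only [smul_eq_mul]
        ring
end
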